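/- Asymptotics in Regime I for parent JAP-B schemes: fix α ∈ (0, 1/2] and let K = ⌊1/α⌋ - 1 ≥ 1. Then T(n, K)/n^2 → 1/(⌊1/α⌋ - 1) as n → ∞. -/

import Mathlib

open Finset Filter

/-- Integer JAP-B delay exponent `max_{1≤k≤K} (a_k - 1)(n-k-1)`. -/
def JAPBdelay (n K : ℕ) (a : Fin K → ℕ) : ℕ :=
  Finset.univ.sup fun i : Fin K => (a i - 1) * (n - (i : ℕ) - 2)

/-- Optimal JAP-B delay exponent `T(n,K)`. -/
noncomputable def Tnk (n K : ℕ) : ℕ :=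
  sInf {t | ∃ a : Fin K → ℕ, (∀ i, 1 ≤ a i) ∧ (∑ i, a i) = n ∧ t = JAPBdelay n K a}

lemma sum_range_ite_lt (m r : ℕ) : (∑ i ∈ Finset.range m, if i < r then 1 else 0) = min m r := by
  induction m with
  | zero => simp
  | succ m ih => rw [Finset.sum_range_succ, ih]; split_ifs <;> omega

lemma Tnk_lower (K n : ℕ) (hK : 1 ≤ K) (hn : K + 2 ≤ n) :
    (n - K) * (n - K - 1) ≤ K * Tnk n K := by
  have hne : {t | ∃ a : Fin K → ℕ, (∀ i, 1 ≤ a i) ∧ (∑ i, a i) = n ∧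
      t = JAPBdelay n K a}.Nonempty := by
    refine ⟨JAPBdelay n K (fun i => 1 + if (i : ℕ) < 1 then n - K else 0),
      fun i => 1 + if (i : ℕ) < 1 then n - K else 0, fun i => le_self_add, ?_, rfl⟩
    have h0 : (∑ i : Fin K, if (i : ℕ) < 1 then n - K else 0) = n - K := by
      have h1 : (∑ i : Fin K, if (i : ℕ) < 1 then n - K else 0)
          = (n - K) * ∑ i : Fin K, if (i : ℕ) < 1 then 1 else 0 := by
        rw [Finset.mul_sum]
        refine Finset.sum_congr rfl fun i _ => ?_
        split_ifs <;> simp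
      rw [h1, Fin.sum_univ_eq_sum_range (fun i => if i < 1 then 1 else 0) K,
        sum_range_ite_lt]
      have : min K 1 = 1 := by omega
      rw [this, mul_one]
    rw [Finset.sum_add_distrib, h0, Finset.sum_const, Finset.card_univ, Fintype.card_fin,
      smul_eq_mul, mul_one]
    omega
  obtain ⟨a, ha1, ha2, hTeq⟩ := Nat.sInf_mem hne
  have hsum1 : (∑ i : Fin K, (a i - 1)) = n - K := by
    have h : (∑ i : Fin K, (a i - 1)) + K = n := by
      have hc : ∀ i ∈ (Finset.univ : Finset (Fin K)), a i - 1 + 1 = a i :=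
        fun i _ => Nat.sub_add_cancel (ha1 i)
      calc (∑ i : Fin K, (a i - 1)) + K = ∑ i : Fin K, (a i - 1 + 1) := by
            rw [Finset.sum_add_distrib, Finset.sum_const, Finset.card_univ, Fintype.card_fin,
              smul_eq_mul, mul_one]
        _ = ∑ i, a i := Finset.sum_congr rfl hc
        _ = n := ha2
    clear hTeq hne
    omega
  have hsup : (∑ i : Fin K, (a i - 1) * (n - (i : ℕ) - 2)) ≤ K * JAPBdelay n K a := by
    have h := Finset.sum_le_card_nsmul Finset.univ
      (fun i : Fin K => (a i - 1) * (n - (i : ℕ) - 2)) (JAPBdelay n K a)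
      (fun i _ => Finset.le_sup (f := fun i : Fin K => (a i - 1) * (n - (i : ℕ) - 2))
        (Finset.mem_univ i))
    simpa [Finset.card_univ, smul_eq_mul] using h
  have hterm : (∑ i : Fin K, (a i - 1) * (n - K - 1)) ≤
      ∑ i : Fin K, (a i - 1) * (n - (i : ℕ) - 2) := by
    refine Finset.sum_le_sum fun i _ => ?_
    have hi := i.isLt
    exact Nat.mul_le_mul_left _ (by clear hTeq hne; omega)
  rw [← Finset.sum_mul, hsum1] at hterm
  calc (n - K) * (n - K - 1) ≤ ∑ i : Fin K, (a i - 1) * (n - (i : ℕ) - 2) := hterm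
    _ ≤ K * JAPBdelay n K a := hsup
    _ = K * Tnk n K := by rw [← hTeq]; rfl

lemma Tnk_upper (K n q r : ℕ) (hK : 1 ≤ K) (hn : K ≤ n) (hrK : r < K)
    (hdm : K * q + r = n - K) : Tnk n K ≤ (q + 1) * n := by
  have hsumind : (∑ i : Fin K, if (i : ℕ) < r then 1 else 0) = r := by
    rw [Fin.sum_univ_eq_sum_range (fun i => if i < r then 1 else 0) K, sum_range_ite_lt]
    omega
  have hmem : JAPBdelay n K (fun i => 1 + q + if (i : ℕ) < r then 1 else 0) ∈
      {t | ∃ a : Fin K → ℕ, (∀ i, 1 ≤ a i) ∧ (∑ i, a i) = n ∧ t = JAPBdelay n K a} := by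
    refine ⟨fun i => 1 + q + if (i : ℕ) < r then 1 else 0, fun i => ?_, ?_, rfl⟩
    · show 1 ≤ 1 + q + if (i : ℕ) < r then 1 else 0
      split_ifs <;> omega
    · show (∑ i : Fin K, (1 + q + if (i : ℕ) < r then 1 else 0)) = n
      rw [Finset.sum_add_distrib, hsumind, Finset.sum_add_distrib, Finset.sum_const,
        Finset.sum_const, Finset.card_univ, Fintype.card_fin, smul_eq_mul, smul_eq_mul, mul_one]
      omega
  refine le_trans (Nat.sInf_le hmem) ?_
  refine Finset.sup_le fun i _ => ?_
  refine Nat.mul_le_mul ?_ (by omega)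
  show (1 + q + if (i : ℕ) < r then 1 else 0) - 1 ≤ q + 1
  split_ifs <;> omega

/-- Regime I asymptotics for parent JAP-B schemes: for fixed `α ∈ (0,1/2]` and
`K = ⌊1/α⌋ - 1`, we have `T(n,K)/n² → 1/(⌊1/α⌋ - 1)` as `n → ∞`. -/
theorem stmt_12 (α : ℝ) (h1 : 0 < α) (h2 : α ≤ 1 / 2)
    (K : ℕ) (hK : K = ⌊1 / α⌋₊ - 1) :
    Tendsto (fun n : ℕ => (Tnk n K : ℝ) / (n : ℝ)^2) atTop
      (nhds (1 / ((⌊1 / α⌋₊ : ℝ) - 1))) := by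
  have hm2 : 2 ≤ ⌊1 / α⌋₊ := by
    refine Nat.le_floor ?_
    rw [Nat.cast_ofNat, le_div_iff₀ h1]
    linarith
  have hK1 : 1 ≤ K := by omega
  have hKcast : ((⌊1 / α⌋₊ : ℝ) - 1) = (K : ℝ) := by
    rw [hK, Nat.cast_sub (by omega)]
    norm_num
  rw [hKcast]
  have hKpos : (0 : ℝ) < K := by exact_mod_cast hK1
  have hK1c : (1 : ℝ) ≤ K := by exact_mod_cast hK1
  refine tendsto_of_tendsto_of_tendsto_of_le_of_le'
    (g := fun n : ℕ => 1 / (K : ℝ) - 3 / n) (h := fun n : ℕ => 1 / (K : ℝ) + 1 / n)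
    ?_ ?_ ?_ ?_
  · have := tendsto_const_div_atTop_nhds_zero_nat (3 : ℝ)
    simpa using (tendsto_const_nhds (x := 1 / (K : ℝ)) (f := atTop)).sub this
  · have := tendsto_const_div_atTop_nhds_zero_nat (1 : ℝ)
    simpa using (tendsto_const_nhds (x := 1 / (K : ℝ)) (f := atTop)).add this
  · filter_upwards [eventually_ge_atTop (K + 2)] with n hn
    have hnpos : (0 : ℝ) < n := by
      have : 0 < n := by omega
      exact_mod_cast this
    have key : ((n : ℝ) - K) * ((n : ℝ) - K - 1) ≤ K * (Tnk n K : ℝ) := by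
      have h := Tnk_lower K n hK1 hn
      have hc : (((n - K) * (n - K - 1) : ℕ) : ℝ) ≤ ((K * Tnk n K : ℕ) : ℝ) := by
        exact_mod_cast h
      rw [Nat.cast_mul, Nat.cast_mul, Nat.cast_sub (by omega : K ≤ n),
        Nat.cast_sub (by omega : 1 ≤ n - K), Nat.cast_sub (by omega : K ≤ n)] at hc
      simpa using hc
    have hnK : (K : ℝ) + 2 ≤ n := by exact_mod_cast hn
    rw [div_sub_div _ _ (ne_of_gt hKpos) (ne_of_gt hnpos),
      div_le_div_iff₀ (by positivity) (by positivity)]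
    nlinarith [mul_le_mul_of_nonneg_right key hnpos.le, hKpos, hnpos,
      mul_nonneg hnpos.le (mul_nonneg (mul_nonneg (sub_nonneg.2 hK1c) hnpos.le) hnpos.le),
      mul_nonneg hnpos.le (sq_nonneg (K : ℝ)), mul_nonneg hnpos.le hKpos.le]
  · filter_upwards [eventually_ge_atTop (K + 2)] with n hn
    have hnpos : (0 : ℝ) < n := by
      have : 0 < n := by omega
      exact_mod_cast this
    have h := Tnk_upper K n ((n - K) / K) ((n - K) % K) hK1 (by omega)
      (Nat.mod_lt _ hK1) (Nat.div_add_mod (n - K) K)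
    have hc : (Tnk n K : ℝ) ≤ (((n - K) / K : ℕ) + 1) * n := by exact_mod_cast h
    have hdiv : (((n - K) / K : ℕ) : ℝ) ≤ ((n : ℝ) - K) / K := by
      calc (((n - K) / K : ℕ) : ℝ) ≤ ((n - K : ℕ) : ℝ) / (K : ℝ) := Nat.cast_div_le
        _ = ((n : ℝ) - K) / K := by rw [Nat.cast_sub (by omega : K ≤ n)]
    have hup : (Tnk n K : ℝ) ≤ ((n : ℝ) / K + 1) * n := by
      refine hc.trans ?_
      have hmono : ((n : ℝ) - K) / K ≤ (n : ℝ) / K := by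
        gcongr
        linarith
      have : (((n - K) / K : ℕ) : ℝ) + 1 ≤ (n : ℝ) / K + 1 := by
        linarith [hdiv]
      exact mul_le_mul_of_nonneg_right this hnpos.le
    rw [div_le_iff₀ (by positivity)]
    have he : (1 / (K : ℝ) + 1 / n) * n ^ 2 = ((n : ℝ) / K + 1) * n := by
      field_simp
    rw [he]
    exact hup
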